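/- For every integer n ≥ 5 one has sin(π/(2(n−1)))/sin(π/n) < (1/n)^{1/(n−1)}. -/

import Mathlib

set_option maxHeartbeats 1000000

open Real

lemma aux_pow (m : ℕ) (hm : 5 ≤ m) : ((m : ℝ) + 1) * (13/20 : ℝ) ^ m ≤ 1 := by
  induction m, hm using Nat.le_induction with
  | base => norm_num
  | succ m hm ih =>
    have hc : (0:ℝ) ≤ (13/20 : ℝ) ^ m := by positivity
    have hm' : (5:ℝ) ≤ (m : ℝ) := by exact_mod_cast hm
    have h : (13/20 : ℝ) * ((m : ℝ) + 2) ≤ (m : ℝ) + 1 := by linarith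
    have h2 := mul_le_mul_of_nonneg_right h hc
    push_cast
    rw [pow_succ]
    nlinarith [ih, hc, h2]

/-- For every integer `n ≥ 5`, `sin(π/(2(n-1)))/sin(π/n) < (1/n)^{1/(n-1)}`. -/
theorem sin_ratio_lt_root (n : ℕ) (hn : 5 ≤ n) :
    Real.sin (Real.pi / (2 * ((n : ℝ) - 1))) / Real.sin (Real.pi / n)
      < ((1 : ℝ) / n) ^ ((1 : ℝ) / ((n : ℝ) - 1)) := by
  rcases le_or_gt 6 n with h6 | h5
  · -- case n ≥ 6
    have hx : (6:ℝ) ≤ (n : ℝ) := by exact_mod_cast h6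
    set x : ℝ := (n : ℝ) with hxdef
    have hx0 : (0:ℝ) < x := by linarith
    have hx1 : (0:ℝ) < x - 1 := by linarith
    have hπ0 : (0:ℝ) < π := Real.pi_pos
    have hπ15 : π < 3.15 := Real.pi_lt_d2
    have hπ2 : π ^ 2 < 10 := by nlinarith
    set a : ℝ := π / (2 * (x - 1)) with hadef
    set b : ℝ := π / x with hbdef
    have ha : 0 < a := by positivity
    have hb : 0 < b := by positivity
    have hb1 : b ≤ 1 := by
      rw [hbdef, div_le_one hx0]; linarith
    have hsinb : b - b ^ 3 / 4 < Real.sin b := by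
      have := Real.sin_gt_sub_cube hb; linarith [pow_pos hb 3]
    have hb3 : b ^ 3 ≤ b := by
      nlinarith [mul_nonneg (mul_nonneg hb.le (sub_nonneg.2 hb1)) (by linarith : (0:ℝ) ≤ 1 + b)]
    have hden : 0 < b - b ^ 3 / 4 := by linarith
    have hsinbpos : 0 < Real.sin b := lt_trans hden hsinb
    have hsina : Real.sin a < a := Real.sin_lt ha
    have step1 : Real.sin a / Real.sin b ≤ a / (b - b ^ 3 / 4) :=
      div_le_div₀ ha.le hsina.le hden hsinb.le
    have step2 : a / (b - b ^ 3 / 4) < 13/20 := by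
      rw [div_lt_iff₀ hden, hadef, hbdef, div_pow]
      rw [div_lt_iff₀ (by positivity : (0:ℝ) < 2 * (x - 1))]
      have key : 40 * π * x ^ 3 < 52 * π * x ^ 2 * (x - 1) - 13 * π ^ 3 * (x - 1) := by
        have hfac : (0:ℝ) ≤ (x - 6) * (12 * x ^ 2 + 20 * x - 10) := by
          apply mul_nonneg (by linarith); nlinarith
        have hπfac : (0:ℝ) ≤ 13 * (10 - π ^ 2) * (x - 1) :=
          mul_nonneg (by nlinarith) hx1.le
        nlinarith [hfac, hπfac, hπ0, mul_pos hπ0 hx1, mul_pos (mul_pos hπ0 hx1) hx1]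
      have e : 13/20 * (π/x - π^3/x^3/4) * (2*(x-1))
          = (13*(4*π*x^2 - π^3)*(2*(x-1))) / (80 * x^3) := by
        field_simp; ring
      rw [e, lt_div_iff₀ (by positivity : (0:ℝ) < 80 * x ^ 3)]
      nlinarith [key]
    have step3 : (13/20 : ℝ) ≤ ((1:ℝ)/x) ^ ((1:ℝ)/(x-1)) := by
      have hm : 5 ≤ n - 1 := by omega
      have hcast : ((n - 1 : ℕ) : ℝ) = x - 1 := by
        have : (1:ℕ) ≤ n := by omega
        push_cast [Nat.cast_sub this]; ring
      have haux := aux_pow (n - 1) hm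
      rw [hcast] at haux
      have hpow : (13/20 : ℝ) ^ (n - 1 : ℕ) ≤ 1 / x := by
        rw [le_div_iff₀ hx0]
        have : x = (x - 1) + 1 := by ring
        nlinarith [haux]
      have heq : ((13/20 : ℝ) ^ (n - 1 : ℕ)) ^ ((1:ℝ)/(x-1)) = 13/20 := by
        rw [← Real.rpow_natCast, ← Real.rpow_mul (by norm_num : (0:ℝ) ≤ 13/20), hcast,
          mul_one_div, div_self (by linarith : x - 1 ≠ 0), Real.rpow_one]
      calc (13/20 : ℝ) = ((13/20 : ℝ) ^ (n - 1 : ℕ)) ^ ((1:ℝ)/(x-1)) := heq.symm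
        _ ≤ ((1:ℝ)/x) ^ ((1:ℝ)/(x-1)) :=
            Real.rpow_le_rpow (by positivity) hpow (by positivity)
    calc Real.sin a / Real.sin b ≤ a / (b - b ^ 3 / 4) := step1
      _ < 13/20 := step2
      _ ≤ ((1:ℝ)/x) ^ ((1:ℝ)/(x-1)) := step3
  · -- case n = 5
    have hn5 : n = 5 := by omega
    subst hn5
    have h5 : ((5:ℕ):ℝ) = 5 := by norm_num
    rw [h5]
    have e1 : (2 * ((5:ℝ) - 1)) = 8 := by norm_num
    have e2 : (1:ℝ) / ((5:ℝ) - 1) = 1/4 := by norm_num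
    rw [e1, e2]
    have hπ0 : (0:ℝ) < π := Real.pi_pos
    have hs5 : 0 < Real.sin (π / 5) :=
      Real.sin_pos_of_pos_of_lt_pi (by positivity) (by linarith)
    have hs8 : 0 ≤ Real.sin (π / 8) :=
      (Real.sin_pos_of_pos_of_lt_pi (by positivity) (by linarith)).le
    -- square root bounds
    have h2lb : (1.4142 : ℝ) < √2 := by
      rw [show (1.4142:ℝ) = √(1.4142^2) by rw [Real.sqrt_sq]; norm_num]
      exact Real.sqrt_lt_sqrt (by positivity) (by norm_num)
    have h2ub : √2 < (1.4143 : ℝ) := by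
      rw [show (1.4143:ℝ) = √(1.4143^2) by rw [Real.sqrt_sq]; norm_num]
      exact Real.sqrt_lt_sqrt (by positivity) (by norm_num)
    have h5lb : (2.2360 : ℝ) < √5 := by
      rw [show (2.2360:ℝ) = √(2.2360^2) by rw [Real.sqrt_sq]; norm_num]
      exact Real.sqrt_lt_sqrt (by positivity) (by norm_num)
    have h5ub : √5 < (2.2361 : ℝ) := by
      rw [show (2.2361:ℝ) = √(2.2361^2) by rw [Real.sqrt_sq]; norm_num]
      exact Real.sqrt_lt_sqrt (by positivity) (by norm_num)
    -- exact values of squares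
    have hsq8 : Real.sin (π / 8) ^ 2 = (2 - √2) / 4 := by
      rw [Real.sin_pi_div_eight]
      rw [div_pow, Real.sq_sqrt (by linarith)]
      norm_num
    have hsq5 : Real.sin (π / 5) ^ 2 = (10 - 2 * √5) / 16 := by
      have hc := Real.cos_pi_div_five
      have := Real.sin_sq_add_cos_sq (π / 5)
      rw [hc] at this
      have h55 : (√5) ^ 2 = 5 := Real.sq_sqrt (by norm_num)
      nlinarith [this, h55]
    -- reduce to fourth powers
    have hR4 : (((1:ℝ)/5) ^ ((1:ℝ)/4)) ^ (4:ℕ) = 1/5 := by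
      rw [← Real.rpow_natCast (((1:ℝ)/5) ^ ((1:ℝ)/4)) 4, ← Real.rpow_mul (by norm_num)]
      norm_num
    have hL4 : (Real.sin (π / 8) / Real.sin (π / 5)) ^ (4:ℕ) < 1/5 := by
      rw [div_pow, div_lt_iff₀ (by positivity)]
      have e8 : Real.sin (π / 8) ^ 4 = ((2 - √2) / 4) ^ 2 := by
        rw [show (4:ℕ) = 2*2 by norm_num, pow_mul, hsq8]
      have e5 : Real.sin (π / 5) ^ 4 = ((10 - 2 * √5) / 16) ^ 2 := by
        rw [show Real.sin (π / 5) ^ 4 = (Real.sin (π / 5) ^ 2) ^ 2 by ring, hsq5]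
      rw [e8, e5]
      have h22 : (√2) ^ 2 = 2 := Real.sq_sqrt (by norm_num)
      have h55 : (√5) ^ 2 = 5 := Real.sq_sqrt (by norm_num)
      nlinarith [h22, h55, h2lb, h5ub]
    have hLnn : 0 ≤ Real.sin (π / 8) / Real.sin (π / 5) := by positivity
    have hRnn : 0 ≤ ((1:ℝ)/5) ^ ((1:ℝ)/4) := by positivity
    refine lt_of_pow_lt_pow_left₀ 4 hRnn ?_
    rw [hR4]
    exact hL4
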